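/- Let γ_m : [m] → ℕ be a nonincreasing scoring function (γ_m(i) ≥ γ_m(i+1) for all i < m), for each m ≥ 2. Suppose the scoring rule R_γ satisfies the simple majority criterion: in every election where more than half of the voters rank some candidate c first, c is the unique winner (has strictly highest total score). Then for each m, γ_m(1) > γ_m(2) = γ_m(3) = ⋯ = γ_m(m); that is, R_γ coincides with Plurality. -/

import Mathlib

/-- the simple majority criterion characterizes Plurality among
single-winner scoring rules. A voter is a bijection from candidates to
(0-indexed) positions; `γ m i` is the score given to the candidate at
(1-indexed) position `i` in an election with `m` candidates. -/
theorem simple_majority_characterizes_plurality (γ : ℕ → ℕ → ℕ)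
    (hmono : ∀ m, 2 ≤ m → ∀ i, 1 ≤ i → i < m → γ m (i + 1) ≤ γ m i)
    (hmaj : ∀ m, 2 ≤ m → ∀ (V : List (Fin m ≃ Fin m)) (c : Fin m),
      V.length < 2 * V.countP (fun v => decide ((v c : ℕ) = 0)) →
      ∀ d : Fin m, d ≠ c →
        (V.map (fun v => γ m ((v d : ℕ) + 1))).sum <
        (V.map (fun v => γ m ((v c : ℕ) + 1))).sum) :
    ∀ m, 2 ≤ m → γ m 2 < γ m 1 ∧ ∀ i, 2 ≤ i → i ≤ m → γ m i = γ m 2 := by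
  intro m hm
  have anti : ∀ i j, 1 ≤ i → i ≤ j → j ≤ m → γ m j ≤ γ m i := by
    intro i j hi hij hjm
    induction j with
    | zero => omega
    | succ n ih =>
      rcases Nat.eq_or_lt_of_le hij with h | h
      · rw [h]
      · exact le_trans (hmono m hm n (by omega) (by omega)) (ih (by omega) (by omega))
  obtain ⟨n, rfl⟩ : ∃ n, m = n + 2 := ⟨m - 2, by omega⟩
  set m := n + 2
  have c : Fin m := ⟨0, by omega⟩
  have h1 : γ m 2 < γ m 1 := by
    have := hmaj m hm [Equiv.refl (Fin m)] ⟨0, by omega⟩ (by simp)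
      ⟨1, by omega⟩ (by exact Fin.ne_of_val_ne (by simp))
    simpa [Nat.mod_eq_of_lt (show 1 < m by omega), Nat.mod_eq_of_lt (show 1 < n + 2 by omega)] using this
  refine ⟨h1, ?_⟩
  have hlast : γ m m = γ m 2 := by
    have hle : γ m m ≤ γ m 2 := anti 2 m (by omega) (by omega) le_rfl
    rcases Nat.eq_or_lt_of_le hle with h | h
    · exact h
    exfalso
    set k := γ m 1 - γ m 2 with hk
    have hk1 : 1 ≤ k := by omega
    set v1 : Fin m ≃ Fin m := Equiv.refl (Fin m) with hv1
    set v2 : Fin m ≃ Fin m := (finRotate m).symm with hv2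
    have hv2d : ((v2 ⟨1, by omega⟩ : Fin m) : ℕ) = 0 := by
      have : v2 ⟨1, by omega⟩ = ⟨0, by omega⟩ := by
        rw [hv2, Equiv.symm_apply_eq]
        apply Fin.ext
        simp [finRotate_succ_apply, Nat.mod_eq_of_lt (show 1 < m by omega), Nat.mod_eq_of_lt (show 1 < n + 2 by omega)]
      rw [this]
    have hv2c : ((v2 ⟨0, by omega⟩ : Fin m) : ℕ) = n + 1 := by
      have : v2 ⟨0, by omega⟩ = Fin.last (n + 1) := by
        rw [hv2, Equiv.symm_apply_eq, finRotate_last]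
        apply Fin.ext
        simp
      rw [this]
      simp
    have key := hmaj m hm (List.replicate (k + 1) v1 ++ List.replicate k v2)
      ⟨0, by omega⟩ ?_ ⟨1, by omega⟩ (Fin.ne_of_val_ne (by simp))
    · simp only [List.map_append, List.map_replicate, List.sum_append,
        List.sum_replicate, smul_eq_mul, hv2d, hv2c] at key
      simp only [hv1, Equiv.refl_apply] at key
      norm_num at key
      have hmm : n + 1 + 1 = m := rfl
      rw [hmm] at key
      -- key : (k+1) * γ m 2 + k * γ m 1 < (k+1) * γ m 1 + k * γ m m
      have hkeq : k + γ m 2 = γ m 1 := by omega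
      have hm2 : k * (γ m m + 1) ≤ k * γ m 2 := Nat.mul_le_mul_left k h
      nlinarith [hkeq, hm2, key]
    · simp only [List.countP_append, List.countP_replicate, List.length_append,
        List.length_replicate, hv1, Equiv.refl_apply, hv2c]
      norm_num
      omega
  intro i h2 him
  have := anti 2 i (by omega) h2 him
  have := anti i m (by omega) him le_rfl
  omega
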